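/- Let G be a finite 2-group and N a characteristic subgroup of G. If the quotient G/N does not satisfy property (*), then G does not satisfy property (*). -/
import Mathlib


/-- A group `G` satisfies property (*) if it embeds as a subgroup of index 2 in
some group `Γ` generated by involutions (elements of order exactly 2). -/
def SatisfiesStar (G : Type*) [Group G] : Prop :=
  ∃ (Γ : Type) (_ : Group Γ) (f : G →* Γ),
    Function.Injective f ∧ f.range.index = 2 ∧
    Subgroup.closure {x : Γ | orderOf x = 2} = ⊤

/-- If `G` is a finite 2-group and `N` is a characteristic subgroup such that
`G/N` fails property (*), then `G` fails property (*). -/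
theorem not_satisfiesStar_of_quotient (G : Type*) [Group G] [Finite G]
    (hcard : ∃ k, Nat.card G = 2 ^ k) (N : Subgroup G) [N.Characteristic]
    (h : ¬ SatisfiesStar (G ⧸ N)) : ¬ SatisfiesStar G := by
  intro hG
  apply h
  obtain ⟨Γ, _, f, hinj, hidx, hgen⟩ := hG
  -- `f.range` is normal since it has index 2
  have hRn : f.range.Normal := by
    constructor
    intro x hx g
    rw [show g * x * g⁻¹ = (g * x) * g⁻¹ by group,
      Subgroup.mul_mem_iff_of_index_two hidx, mul_mem_cancel_right hx, inv_mem_iff]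
  -- `N.map f` is normal in `Γ`
  have key : ∀ γ : Γ, ∀ n ∈ N, γ * f n * γ⁻¹ ∈ N.map f := by
    intro γ n hn
    have hmem : ∀ x : G, ∃ y, f y = γ * f x * γ⁻¹ := fun x =>
      hRn.conj_mem (f x) ⟨x, rfl⟩ γ
    choose c hc using hmem
    have hcinj : Function.Injective c := by
      intro x y hxy
      apply hinj
      have h2 := congrArg f hxy
      rw [hc, hc] at h2
      exact mul_left_cancel (mul_right_cancel h2)
    let cm : G →* G :=
      { toFun := c
        map_one' := by
          apply hinj
          rw [hc, map_one, mul_one, mul_inv_cancel]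
        map_mul' := by
          intro x y
          apply hinj
          rw [map_mul, hc, hc, hc, map_mul]
          group }
    let e : G ≃* G := MulEquiv.ofBijective cm (Finite.injective_iff_bijective.mp hcinj)
    have hfix := (inferInstance : N.Characteristic).fixed e
    have hcn : c n ∈ N := by rw [← hfix] at hn; exact hn
    exact ⟨c n, hcn, hc n⟩
  have hMn : (N.map f).Normal := by
    constructor
    rintro m ⟨n, hn, rfl⟩ γ
    exact key γ n hn
  let π := QuotientGroup.mk' (N.map f)
  let g : G →* Γ ⧸ N.map f := π.comp f
  have hker : g.ker = N := by
    ext x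
    constructor
    · intro hx
      have hx' : f x ∈ N.map f := by
        have : π (f x) = 1 := hx
        rwa [QuotientGroup.mk'_apply, QuotientGroup.eq_one_iff] at this
      obtain ⟨n, hn, hfn⟩ := hx'
      cases hinj hfn
      exact hn
    · intro hx
      show π (f x) = 1
      rw [QuotientGroup.mk'_apply, QuotientGroup.eq_one_iff]
      exact ⟨x, hx, rfl⟩
  -- the induced map on quotients
  let φ : G ⧸ N →* Γ ⧸ N.map f :=
    QuotientGroup.lift N g (fun x hx => by rw [← hker] at hx; exact hx)
  have hφmk : ∀ x : G, φ (QuotientGroup.mk x) = g x := fun _ => rfl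
  have hφinj : Function.Injective φ := by
    rw [injective_iff_map_eq_one]
    intro a ha
    obtain ⟨x, rfl⟩ := QuotientGroup.mk_surjective a
    have hx : x ∈ g.ker := ha
    rw [hker] at hx
    exact (QuotientGroup.eq_one_iff x).mpr hx
  have hrange : φ.range = g.range := by
    ext y
    constructor
    · rintro ⟨a, rfl⟩
      obtain ⟨x, rfl⟩ := QuotientGroup.mk_surjective a
      exact ⟨x, rfl⟩
    · rintro ⟨x, rfl⟩
      exact ⟨QuotientGroup.mk x, rfl⟩
  have hπsurj : Function.Surjective π := QuotientGroup.mk'_surjective _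
  refine ⟨Γ ⧸ N.map f, inferInstance, φ, hφinj, ?_, ?_⟩
  · -- index 2
    rw [hrange]
    have hk : π.ker ≤ f.range := by
      show (QuotientGroup.mk' (N.map f)).ker ≤ f.range
      rw [QuotientGroup.ker_mk']
      exact Subgroup.map_le_range f N
    rw [show g.range = f.range.map π from MonoidHom.range_comp π f,
      f.range.index_map_eq hπsurj hk]
    exact hidx
  · -- generated by involutions
    have h1 : (Subgroup.closure {x : Γ | orderOf x = 2}).map π = ⊤ := by
      rw [hgen]
      rwa [← MonoidHom.range_eq_top, MonoidHom.range_eq_map] at hπsurj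
    rw [MonoidHom.map_closure] at h1
    rw [eq_top_iff, ← h1]
    apply (Subgroup.closure_le _).mpr
    rintro y ⟨x, hx, rfl⟩
    have hdvd : orderOf (π x) ∣ 2 := hx ▸ orderOf_map_dvd π x
    rcases (Nat.prime_two.eq_one_or_self_of_dvd _ hdvd) with h1 | h2
    · have : π x = 1 := orderOf_eq_one_iff.mp h1
      rw [this]; exact Subgroup.one_mem _
    · exact Subgroup.subset_closure h2
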